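/- Let G be a finite simple graph with maximum degree at most Δ, let C be a proper partial coloring of G² with colors from [Δ²+1], let K be a nonempty set of vertices, and let M be a colorful matching in K satisfying |M| ≥ ā_K (i.e., |M|·|K| ≥ Σ_{v∈K} a_v). Then |Ψ(K)| ≥ |K̊|, i.e., the clique palette of K contains at least as many colors as K has uncolored vertices. -/

import Mathlib

open Finset

variable {V : Type*} [Fintype V] [DecidableEq V]

/-- Adjacency in the square graph `G²`: distinct vertices at distance at most 2 in `G`. -/
def sqAdj (G : SimpleGraph V) (u v : V) : Prop :=
  u ≠ v ∧ (G.Adj u v ∨ ∃ w, G.Adj u w ∧ G.Adj w v)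

instance (G : SimpleGraph V) [DecidableRel G.Adj] : DecidableRel (sqAdj G) := fun u v =>
  inferInstanceAs (Decidable (u ≠ v ∧ (G.Adj u v ∨ ∃ w, G.Adj u w ∧ G.Adj w v)))

/-- The distance-2 neighborhood `N²(v)`: the neighborhood of `v` in the square graph `G²`. -/
def N2 (G : SimpleGraph V) [DecidableRel G.Adj] (v : V) : Finset V :=
  univ.filter fun u => sqAdj G v u

/-- `C` is a proper partial coloring of `G²`: two vertices adjacent in `G²`
that are both colored receive distinct colors. -/
def ProperPartial (G : SimpleGraph V) {n : ℕ} (C : V → Option (Fin n)) : Prop :=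
  ∀ u v : V, sqAdj G u v → ∀ c : Fin n, C u = some c → C v ≠ some c

/-- `C(S)`: the set of colors used on the colored vertices of `S`. -/
def usedColors {n : ℕ} (C : V → Option (Fin n)) (S : Finset V) : Finset (Fin n) :=
  S.biUnion fun v => (C v).toFinset

/-- The palette of a set `S`: colors not used by any colored vertex of `S`.
For `S = K` this is the clique palette `Ψ(K)`; for `S = N²(v)` it is the palette `Ψ(v)`. -/
def palette {n : ℕ} (C : V → Option (Fin n)) (S : Finset V) : Finset (Fin n) :=
  univ \ usedColors C S

/-- A colorful matching in `K` w.r.t. `C`: a collection of pairwise disjoint pairs of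
distinct vertices of `K`, non-adjacent in `G²`, both colored with the same color. -/
def IsColorfulMatching (G : SimpleGraph V) {n : ℕ} (C : V → Option (Fin n))
    (K : Finset V) (M : Finset (V × V)) : Prop :=
  (∀ p ∈ M, p.1 ≠ p.2 ∧ p.1 ∈ K ∧ p.2 ∈ K ∧ ¬ sqAdj G p.1 p.2 ∧
      C p.1 ≠ none ∧ C p.1 = C p.2) ∧
  ∀ p ∈ M, ∀ q ∈ M, p ≠ q → ({p.1, p.2} : Finset V) ∩ {q.1, q.2} = ∅

/-- If `K` has a colorful matching `M` with `|M| ≥ ā_K` (i.e. `|M|·|K| ≥ Σ_{v∈K} a_v`),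
then the clique palette of `K` contains at least as many colors as `K` has
uncolored vertices: `|Ψ(K)| ≥ |K̊|`. -/
theorem cliquePalette_ge_uncolored (G : SimpleGraph V) [DecidableRel G.Adj] (Δ : ℕ)
    (hdeg : ∀ v, G.degree v ≤ Δ)
    (C : V → Option (Fin (Δ ^ 2 + 1))) (hC : ProperPartial G C)
    (K : Finset V) (hK : K.Nonempty)
    (M : Finset (V × V)) (hM : IsColorfulMatching G C K M)
    (hsize : ∑ v ∈ K, (K \ N2 G v).card ≤ M.card * K.card) :
    (K.filter fun v => C v = none).card ≤ (palette C K).card := by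
  classical
  -- Step 1: find a vertex of small anti-degree
  obtain ⟨v, hvK, hav⟩ : ∃ v ∈ K, (K \ N2 G v).card ≤ M.card := by
    by_contra h
    push_neg at h
    have hlt : M.card * K.card < ∑ v ∈ K, (K \ N2 G v).card := by
      calc M.card * K.card = ∑ _v ∈ K, M.card := by
            rw [sum_const, smul_eq_mul, mul_comm]
        _ < ∑ v ∈ K, (K \ N2 G v).card :=
            sum_lt_sum_of_nonempty hK fun w hw => h w hw
    omega
  -- Step 2: bound on |N²(v)|
  have hN2 : (N2 G v).card ≤ Δ ^ 2 := by
    have hsub : N2 G v ⊆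
        G.neighborFinset v ∪ (G.neighborFinset v).biUnion
          (fun w => (G.neighborFinset w).erase v) := by
      intro u hu
      simp only [N2, mem_filter, mem_univ, true_and] at hu
      unfold sqAdj at hu
      obtain ⟨hne, h | ⟨w, hvw, hwu⟩⟩ := hu
      · exact mem_union_left _ (by simpa using h)
      · refine mem_union_right _ (mem_biUnion.2 ⟨w, by simpa using hvw, ?_⟩)
        exact mem_erase.2 ⟨hne.symm, by simpa using hwu⟩
    have hb : ((G.neighborFinset v).biUnion
        (fun w => (G.neighborFinset w).erase v)).card ≤ Δ * (Δ - 1) := by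
      calc ((G.neighborFinset v).biUnion (fun w => (G.neighborFinset w).erase v)).card
          ≤ ∑ w ∈ G.neighborFinset v, ((G.neighborFinset w).erase v).card :=
            card_biUnion_le
        _ ≤ ∑ _w ∈ G.neighborFinset v, (Δ - 1) := by
            refine sum_le_sum fun w hw => ?_
            have hvw : G.Adj v w := by simpa using hw
            have hvm : v ∈ G.neighborFinset w := by simpa using hvw.symm
            rw [card_erase_of_mem hvm]
            have := hdeg w
            rw [SimpleGraph.degree] at this
            omega
        _ = G.degree v * (Δ - 1) := by rw [sum_const, smul_eq_mul, SimpleGraph.degree]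
        _ ≤ Δ * (Δ - 1) := Nat.mul_le_mul_right _ (hdeg v)
    have h1 : (N2 G v).card ≤ Δ + Δ * (Δ - 1) := by
      calc (N2 G v).card ≤ _ := card_le_card hsub
        _ ≤ (G.neighborFinset v).card + _ := card_union_le _ _
        _ ≤ Δ + Δ * (Δ - 1) := by
            have := hdeg v
            rw [SimpleGraph.degree] at this
            omega
    have h2 : Δ + Δ * (Δ - 1) ≤ Δ ^ 2 := by
      rcases Δ with _ | d
      · simp
      · simp only [Nat.succ_sub_one, pow_two]
        nlinarith
    omega
  -- Step 3: |K| ≤ Δ² + |M|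
  have hKcard : K.card ≤ Δ ^ 2 + M.card := by
    have := card_inter_add_card_sdiff K (N2 G v)
    have hint : (K ∩ N2 G v).card ≤ (N2 G v).card :=
      card_le_card (inter_subset_right)
    omega
  -- Step 4: color counting
  let f : V → Fin (Δ ^ 2 + 1) := fun u => (C u).getD ⟨0, Nat.succ_pos _⟩
  have hf : ∀ u c, C u = some c → f u = c := by
    intro u c hc
    simp [f, hc]
  have hf' : ∀ u, C u ≠ none → C u = some (f u) := by
    intro u hu
    cases h : C u with
    | none => exact absurd h hu
    | some c => rw [hf u c h]
  have hmemUsed : ∀ c : Fin (Δ ^ 2 + 1), c ∈ usedColors C K ↔ ∃ u ∈ K, C u = some c := by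
    intro c
    simp [usedColors, Option.mem_toFinset, Option.mem_def]
  set Kc := K.filter (fun u => ¬ (C u = none)) with hKc
  have hsplit : (K.filter fun u => C u = none).card + Kc.card = K.card :=
    card_filter_add_card_filter_not _
  have hmain : (usedColors C K).card + M.card ≤ Kc.card := by
    have h1 : Kc.card = ∑ c ∈ usedColors C K, (Kc.filter fun u => f u = c).card := by
      refine card_eq_sum_card_fiberwise fun u hu => ?_
      rw [hKc, mem_coe, mem_filter] at hu
      exact (hmemUsed _).2 ⟨u, hu.1, by rw [hf' u hu.2]⟩
    have h2 : M.card = ∑ c ∈ usedColors C K, (M.filter fun p => f p.1 = c).card := by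
      refine card_eq_sum_card_fiberwise fun p hp => ?_
      obtain ⟨_, hp1K, _, _, hp1c, _⟩ := hM.1 p hp
      exact (hmemUsed _).2 ⟨p.1, hp1K, by rw [hf' p.1 hp1c]⟩
    rw [h1, h2]
    calc (usedColors C K).card + ∑ c ∈ usedColors C K, (M.filter fun p => f p.1 = c).card
        = ∑ c ∈ usedColors C K, (1 + (M.filter fun p => f p.1 = c).card) := by
          rw [sum_add_distrib, sum_const, smul_eq_mul, mul_one]
      _ ≤ _ := by
          refine sum_le_sum fun c hc => ?_
          set Mc := M.filter fun p => f p.1 = c with hMc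
          set Fib := Kc.filter fun u => f u = c with hFib
          -- each matched pair of color c contributes two distinct fiber elements
          have hSsub : Mc.biUnion (fun p => ({p.1, p.2} : Finset V)) ⊆ Fib := by
            intro u hu
            obtain ⟨p, hpMc, hup⟩ := mem_biUnion.1 hu
            rw [hMc, mem_filter] at hpMc
            obtain ⟨hpM, hpc⟩ := hpMc
            obtain ⟨hne, hp1K, hp2K, _, hp1c, hceq⟩ := hM.1 p hpM
            have hp2c : C p.2 ≠ none := by rw [← hceq]; exact hp1c
            have hC2 : C p.2 = some c := by
              rw [← hceq, hf' p.1 hp1c, hpc]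
            rcases mem_insert.1 hup with h | h
            · subst h
              rw [hFib, mem_filter]
              exact ⟨by rw [hKc, mem_filter]; exact ⟨hp1K, hp1c⟩, hpc⟩
            · have h2 : u = p.2 := by simpa using h
              subst h2
              rw [hFib, mem_filter]
              exact ⟨by rw [hKc, mem_filter]; exact ⟨hp2K, hp2c⟩, hf _ _ hC2⟩
          have hScard : (Mc.biUnion fun p => ({p.1, p.2} : Finset V)).card = 2 * Mc.card := by
            rw [card_biUnion]
            · have h2 : ∀ p ∈ Mc, ({p.1, p.2} : Finset V).card = 2 := by
                intro p hp
                rw [hMc, mem_filter] at hp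
                obtain ⟨hne, _⟩ := hM.1 p hp.1
                rw [card_insert_of_notMem (by simpa using hne), card_singleton]
              rw [sum_congr rfl h2, sum_const, smul_eq_mul, mul_comm]
            · intro p hp q hq hpq
              rw [hMc, mem_coe, mem_filter] at hp hq
              exact disjoint_iff_inter_eq_empty.2 (hM.2 p hp.1 q hq.1 hpq)
          have hSF : 2 * Mc.card ≤ Fib.card :=
            hScard ▸ card_le_card hSsub
          rcases Nat.eq_zero_or_pos Mc.card with h0 | h1
          · obtain ⟨u, huK, huc⟩ := (hmemUsed c).1 hc
            have huF : u ∈ Fib := by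
              rw [hFib, mem_filter]
              exact ⟨by rw [hKc, mem_filter]; exact ⟨huK, by simp [huc]⟩, hf _ _ huc⟩
            have := card_pos.2 ⟨u, huF⟩
            omega
          · omega
  -- Conclusion
  have hpal : (palette C K).card = (Δ ^ 2 + 1) - (usedColors C K).card := by
    rw [palette, card_sdiff_of_subset (subset_univ _), card_univ, Fintype.card_fin]
  have hused_le : (usedColors C K).card ≤ Δ ^ 2 + 1 :=
    (card_le_card (subset_univ _)).trans (by rw [card_univ, Fintype.card_fin])
  omega
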